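/- arXiv:2109.10801 — 2 statements merged into one kernel-verified Lean document; each statement's English description precedes it below -/
import Mathlib

section
/- Let V be a finite-dimensional complex vector space of dimension n, let B be a symmetric bilinear form on V, and let 0 < p ≤ n. Suppose e : Fin n → V and f : Fin n → V are two bases of V that are both orthonormal with respect to B. Then in the tensor product (⋀^p V) ⊗ (⋀^p V) one has the equality ∑_I (e_{I(0)} ∧ ⋯ ∧ e_{I(p−1)}) ⊗ (e_{I(0)} ∧ ⋯ ∧ e_{I(p−1)}) = ∑_I (f_{I(0)} ∧ ⋯ ∧ f_{I(p−1)}) ⊗ (f_{I(0)} ∧ ⋯ ∧ f_{I(p−1)}), where both sums range over all strictly monotone maps I : Fin p → Fin n. -/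
open scoped Classical TensorProduct

set_option synthInstance.maxHeartbeats 1000000
set_option maxHeartbeats 1000000

/-- Symmetrization: the sum over all maps `Fin p → Fin n` of a function that vanishes on
non-injective maps and is permutation-invariant equals `p!` times the sum over strictly
monotone maps. -/
lemma sum_univ_eq_factorial_smul_sum_strictMono {N : Type*} [AddCommMonoid N] {p n : ℕ}
    (G : (Fin p → Fin n) → N)
    (h0 : ∀ r, ¬ Function.Injective r → G r = 0)
    (hperm : ∀ (r : Fin p → Fin n) (σ : Equiv.Perm (Fin p)), G (r ∘ σ) = G r) :
    ∑ r : Fin p → Fin n, G r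
      = Nat.factorial p • ∑ I ∈ Finset.univ.filter (fun I : Fin p → Fin n => StrictMono I), G I := by
  classical
  rw [← Finset.sum_filter_add_sum_filter_not Finset.univ (fun r => Function.Injective r)]
  have h1 : ∑ r ∈ Finset.univ.filter (fun r : Fin p → Fin n => ¬ Function.Injective r), G r
      = 0 := by
    refine Finset.sum_eq_zero fun r hr => h0 r (Finset.mem_filter.mp hr).2
  rw [h1, add_zero]
  have hbij : ∑ r ∈ Finset.univ.filter (fun r : Fin p → Fin n => Function.Injective r), G r
      = ∑ x ∈ (Finset.univ.filter (fun I : Fin p → Fin n => StrictMono I)) ×ˢ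
          (Finset.univ : Finset (Equiv.Perm (Fin p))), G (x.1 ∘ x.2) := by
    refine (Finset.sum_bij (fun x _ => x.1 ∘ x.2) ?_ ?_ ?_ ?_).symm
    · rintro ⟨J, σ⟩ hx
      have hJ : StrictMono J := (Finset.mem_filter.mp (Finset.mem_product.mp hx).1).2
      exact Finset.mem_filter.mpr ⟨Finset.mem_univ _, hJ.injective.comp σ.injective⟩
    · rintro ⟨J, σ⟩ hx ⟨J', σ'⟩ hx' hEq
      have hEq' : J ∘ ⇑σ = J' ∘ ⇑σ' := hEq
      have hJ : StrictMono J := (Finset.mem_filter.mp (Finset.mem_product.mp hx).1).2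
      have hJ' : StrictMono J' := (Finset.mem_filter.mp (Finset.mem_product.mp hx').1).2
      set s : Finset (Fin n) := Finset.image J Finset.univ with hs
      have hcard : s.card = p := by
        rw [hs, Finset.card_image_of_injective _ hJ.injective, Finset.card_univ,
          Fintype.card_fin]
      have hJmem : ∀ x, J x ∈ s := fun x => Finset.mem_image_of_mem _ (Finset.mem_univ x)
      have hJ'mem : ∀ x, J' x ∈ s := by
        intro x
        have h2 : J' x = (J ∘ ⇑σ) (σ'.symm x) := by rw [hEq']; simp
        rw [h2]
        exact Finset.mem_image_of_mem _ (Finset.mem_univ _)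
      have hJeq : J = s.orderEmbOfFin hcard := Finset.orderEmbOfFin_unique hcard hJmem hJ
      have hJ'eq : J' = s.orderEmbOfFin hcard := Finset.orderEmbOfFin_unique hcard hJ'mem hJ'
      have hJJ' : J = J' := hJeq.trans hJ'eq.symm
      have hσ : σ = σ' := by
        apply Equiv.ext; intro a
        have h2 : J (σ a) = J' (σ' a) := congrFun hEq' a
        rw [← hJJ'] at h2
        exact hJ.injective h2
      simp [hJJ', hσ]
    · intro r hr
      have hrinj : Function.Injective r := (Finset.mem_filter.mp hr).2
      set s : Finset (Fin n) := Finset.image r Finset.univ with hs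
      have hcard : s.card = p := by
        rw [hs, Finset.card_image_of_injective _ hrinj, Finset.card_univ, Fintype.card_fin]
      have hmem : ∀ a, r a ∈ s := fun a => Finset.mem_image_of_mem _ (Finset.mem_univ a)
      have hσinj : Function.Injective
          (fun a => (s.orderIsoOfFin hcard).symm ⟨r a, hmem a⟩) := by
        intro a b hab
        have := congrArg (s.orderIsoOfFin hcard) hab
        simp only [OrderIso.apply_symm_apply] at this
        exact hrinj (Subtype.ext_iff.mp this)
      refine ⟨⟨s.orderEmbOfFin hcard,
        Equiv.ofBijective _ ((Finite.injective_iff_bijective).mp hσinj)⟩, ?_, ?_⟩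
      · refine Finset.mem_product.mpr ⟨Finset.mem_filter.mpr
          ⟨Finset.mem_univ _, (s.orderEmbOfFin hcard).strictMono⟩, Finset.mem_univ _⟩
      · funext a
        simp only [Function.comp_apply, Equiv.ofBijective_apply]
        rw [← Finset.coe_orderIsoOfFin_apply]
        simp
    · rintro ⟨J, σ⟩ _
      rfl
  rw [hbij]
  rw [Finset.sum_product]
  have : ∀ J ∈ Finset.univ.filter (fun I : Fin p → Fin n => StrictMono I),
      ∑ σ : Equiv.Perm (Fin p), G (J ∘ σ) = Nat.factorial p • G J := by
    intro J _
    rw [Finset.sum_congr rfl (fun σ _ => hperm J σ), Finset.sum_const, Finset.card_univ,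
      Fintype.card_perm, Fintype.card_fin]
  rw [Finset.sum_congr rfl this, ← Finset.smul_sum]

/-- The wedge product of a family `v : Fin p → M`, as an element of the `p`-th
exterior power `⋀[R]^p M`. -/
noncomputable def wedge (R : Type*) [CommRing R] {M : Type*} [AddCommGroup M]
    [Module R M] (p : ℕ) (v : Fin p → M) : ⋀[R]^p M :=
  ⟨ExteriorAlgebra.ιMulti R p v,
    ExteriorAlgebra.ιMulti_range R p (Set.mem_range_self v)⟩

/-- If `e` and `f` are two bases of an `n`-dimensional complex vector space `V`, both
orthonormal for a symmetric bilinear form `B`, then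
`∑_I e_I ⊗ e_I = ∑_I f_I ⊗ f_I` in `(⋀^p V) ⊗ (⋀^p V)`, where the sums range over all
strictly monotone `I : Fin p → Fin n` and `e_I = e_{I 0} ∧ ⋯ ∧ e_{I (p-1)}`. -/
theorem invariant_vector_basis_independent {V : Type*} [AddCommGroup V] [Module ℂ V]
    [FiniteDimensional ℂ V] {n p : ℕ} (hp : 0 < p) (hpn : p ≤ n)
    (hdim : Module.finrank ℂ V = n)
    (B : V →ₗ[ℂ] V →ₗ[ℂ] ℂ) (hsymm : ∀ v w, B v w = B w v)
    (e f : Module.Basis (Fin n) ℂ V)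
    (he : ∀ i j, B (e i) (e j) = if i = j then 1 else 0)
    (hf : ∀ i j, B (f i) (f j) = if i = j then 1 else 0) :
    (∑ I ∈ Finset.univ.filter (fun I : Fin p → Fin n => StrictMono I),
        wedge ℂ p (fun a => e (I a)) ⊗ₜ[ℂ] wedge ℂ p (fun a => e (I a))) =
      ∑ I ∈ Finset.univ.filter (fun I : Fin p → Fin n => StrictMono I),
        wedge ℂ p (fun a => f (I a)) ⊗ₜ[ℂ] wedge ℂ p (fun a => f (I a)) := by
  classical
  -- The wedge map as an alternating map into the exterior power.
  set W : V [⋀^Fin p]→ₗ[ℂ] ⋀[ℂ]^p V :=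
    (ExteriorAlgebra.ιMulti ℂ p).codRestrict (⋀[ℂ]^p V)
      (fun v => ExteriorAlgebra.ιMulti_range ℂ p (Set.mem_range_self v)) with hWdef
  have hwedge : ∀ v : Fin p → V, wedge ℂ p v = W v := fun v => rfl
  -- transition coefficients
  set A : Fin n → Fin n → ℂ := fun i j => e.repr (f j) i with hA
  have hfe : ∀ j, f j = ∑ i, A i j • e i := fun j => (e.sum_repr (f j)).symm
  -- orthogonality relations
  have hAtA : ∀ j k, ∑ i, A i j * A i k = if j = k then 1 else 0 := by
    intro j k
    have h1 := hf j k
    rw [hfe j, hfe k] at h1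
    exact (by simpa [map_sum, map_smul, LinearMap.sum_apply, LinearMap.smul_apply, smul_eq_mul,
      he, mul_ite, Finset.mul_sum, mul_comm] using h1 : _)
  have hAAt : ∀ i i', ∑ j, A i j * A i' j = if i = i' then 1 else 0 := by
    set M : Matrix (Fin n) (Fin n) ℂ := Matrix.of A with hMdef
    have hM : M.transpose * M = 1 := by
      ext j k
      simpa [hMdef, Matrix.mul_apply, Matrix.one_apply] using hAtA j k
    have hM' : M * M.transpose = 1 := mul_eq_one_comm.mpr hM
    intro i i'
    have h2 := Matrix.ext_iff.mpr hM' i i'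
    simpa [hMdef, Matrix.mul_apply, Matrix.one_apply] using h2
  -- expansion of the wedge of `f` along any map `r`
  have hexp : ∀ r : Fin p → Fin n, W (fun a => f (r a))
      = ∑ s : Fin p → Fin n, (∏ a, A (s a) (r a)) • W (fun a => e (s a)) := by
    intro r
    have h1 : (fun a => f (r a)) = fun a => ∑ i, A i (r a) • e i :=
      funext fun a => hfe (r a)
    calc W (fun a => f (r a))
        = W.toMultilinearMap (fun a => ∑ i, A i (r a) • e i) := by rw [h1]; rfl
      _ = ∑ s : Fin p → Fin n, W.toMultilinearMap (fun a => A (s a) (r a) • e (s a)) :=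
          W.toMultilinearMap.map_sum (g := fun a i => A i (r a) • e i)
      _ = ∑ s : Fin p → Fin n, (∏ a, A (s a) (r a)) • W (fun a => e (s a)) := by
          refine Finset.sum_congr rfl fun s _ => ?_
          exact W.toMultilinearMap.map_smul_univ (fun a => A (s a) (r a)) (fun a => e (s a))
  -- key identity: the symmetrized sums agree
  have key : ∑ r : Fin p → Fin n, W (fun a => f (r a)) ⊗ₜ[ℂ] W (fun a => f (r a))
      = ∑ r : Fin p → Fin n, W (fun a => e (r a)) ⊗ₜ[ℂ] W (fun a => e (r a)) := by
    calc ∑ r : Fin p → Fin n, W (fun a => f (r a)) ⊗ₜ[ℂ] W (fun a => f (r a))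
        = ∑ r : Fin p → Fin n, ∑ s : Fin p → Fin n, ∑ t : Fin p → Fin n,
            ((∏ a, A (s a) (r a)) * (∏ a, A (t a) (r a))) •
              (W (fun a => e (s a)) ⊗ₜ[ℂ] W (fun a => e (t a))) := by
          refine Finset.sum_congr rfl fun r _ => ?_
          rw [hexp r, TensorProduct.sum_tmul]
          refine Finset.sum_congr rfl fun s _ => ?_
          rw [TensorProduct.tmul_sum]
          refine Finset.sum_congr rfl fun t _ => ?_
          rw [TensorProduct.tmul_smul, TensorProduct.smul_tmul', TensorProduct.smul_tmul',
            smul_smul, mul_comm]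
      _ = ∑ s : Fin p → Fin n, ∑ t : Fin p → Fin n,
            (∑ r : Fin p → Fin n, (∏ a, A (s a) (r a)) * (∏ a, A (t a) (r a))) •
              (W (fun a => e (s a)) ⊗ₜ[ℂ] W (fun a => e (t a))) := by
          rw [Finset.sum_comm]
          refine Finset.sum_congr rfl fun s _ => ?_
          rw [Finset.sum_comm]
          refine Finset.sum_congr rfl fun t _ => ?_
          rw [Finset.sum_smul]
      _ = ∑ r : Fin p → Fin n, W (fun a => e (r a)) ⊗ₜ[ℂ] W (fun a => e (r a)) := by
          have hco : ∀ s t : Fin p → Fin n,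
              (∑ r : Fin p → Fin n, (∏ a, A (s a) (r a)) * (∏ a, A (t a) (r a)))
                = if s = t then 1 else 0 := by
            intro s t
            have h1 : ∀ r : Fin p → Fin n, (∏ a, A (s a) (r a)) * (∏ a, A (t a) (r a))
                = ∏ a, (A (s a) (r a) * A (t a) (r a)) :=
              fun r => (Finset.prod_mul_distrib).symm
            rw [Finset.sum_congr rfl fun r _ => h1 r]
            have h2 : ∑ x : Fin p → Fin n, ∏ a, (A (s a) (x a) * A (t a) (x a))
                = ∏ a, ∑ j, (A (s a) j * A (t a) j) := by
              rw [Finset.prod_univ_sum, Fintype.piFinset_univ]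
            rw [h2]
            by_cases hst : s = t
            · subst hst; simp [hAAt]
            · obtain ⟨a, ha⟩ := Function.ne_iff.mp hst
              rw [if_neg hst]
              exact Finset.prod_eq_zero (Finset.mem_univ a)
                (by rw [hAAt (s a) (t a), if_neg ha])
          simp only [hco, ite_smul, one_smul, zero_smul]
          refine Finset.sum_congr rfl fun s _ => ?_
          simp
  -- vanishing on non-injective maps
  have h0 : ∀ (g : Fin n → V) (r : Fin p → Fin n), ¬ Function.Injective r →
      W (fun a => g (r a)) ⊗ₜ[ℂ] W (fun a => g (r a)) = 0 := by
    intro g r hr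
    obtain ⟨a, b, hab, hne⟩ := Function.not_injective_iff.mp hr
    have h1 : W (fun a => g (r a)) = 0 :=
      W.map_eq_zero_of_eq _ (show g (r a) = g (r b) by rw [hab]) hne
    rw [h1, TensorProduct.zero_tmul]
  -- invariance under permutations
  have hpm : ∀ (g : Fin n → V) (r : Fin p → Fin n) (σ : Equiv.Perm (Fin p)),
      W (fun a => g ((r ∘ σ) a)) ⊗ₜ[ℂ] W (fun a => g ((r ∘ σ) a))
        = W (fun a => g (r a)) ⊗ₜ[ℂ] W (fun a => g (r a)) := by
    intro g r σ
    have h1 : (fun a => g ((r ∘ σ) a)) = (fun a => g (r a)) ∘ σ := rfl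
    rw [h1, W.map_perm]
    rcases Int.units_eq_one_or (Equiv.Perm.sign σ) with h | h <;> rw [h]
    · simp
    · simp only [Units.smul_def, Units.val_neg, Units.val_one, neg_smul, one_smul]
      rw [TensorProduct.neg_tmul, TensorProduct.tmul_neg]
      exact neg_neg ((W fun a => g (r a)) ⊗ₜ[ℂ] (W fun a => g (r a)))
  have hsymE := sum_univ_eq_factorial_smul_sum_strictMono
    (fun r => W (fun a => e (r a)) ⊗ₜ[ℂ] W (fun a => e (r a))) (h0 e) (fun r σ => hpm e r σ)
  have hsymF := sum_univ_eq_factorial_smul_sum_strictMono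
    (fun r => W (fun a => f (r a)) ⊗ₜ[ℂ] W (fun a => f (r a))) (h0 f) (fun r σ => hpm f r σ)
  simp only [hwedge]
  have h2 : (Nat.factorial p : ℂ) •
      (∑ I ∈ Finset.univ.filter (fun I : Fin p → Fin n => StrictMono I),
        W (fun a => e (I a)) ⊗ₜ[ℂ] W (fun a => e (I a)))
      = (Nat.factorial p : ℂ) •
      (∑ I ∈ Finset.univ.filter (fun I : Fin p → Fin n => StrictMono I),
        W (fun a => f (I a)) ⊗ₜ[ℂ] W (fun a => f (I a))) := by
    rw [Nat.cast_smul_eq_nsmul, Nat.cast_smul_eq_nsmul, ← hsymE, ← hsymF, key]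
  exact smul_right_injective _ (Nat.cast_ne_zero.mpr (Nat.factorial_ne_zero p)) h2
end

section
/- Let V be a finite-dimensional complex vector space, B a symmetric bilinear form on V, W a subspace of V, and p a natural number with p ≤ dim W. Then the rank of the restriction of B to W is at least p if and only if there exist families v, w : Fin p → W such that the determinant of the p×p matrix with (i,j) entry B(v i, w j) is nonzero. -/
/-- The rank of the restriction of a bilinear form `B` on `V` to a subspace `W`:
the rank of the linear map `W → W*` sending `w` to `w' ↦ B w w'`. -/
noncomputable def bilinRestrictRank {K V : Type*} [Field K] [AddCommGroup V] [Module K V]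
    (B : V →ₗ[K] V →ₗ[K] K) (W : Submodule K V) : ℕ :=
  Module.finrank K (LinearMap.range (B.compl₁₂ W.subtype W.subtype))

/-- A linearly independent family of functionals on a finite-dimensional space is jointly
surjective. -/
lemma pi_surjective_of_linearIndependent {K W : Type*} [Field K] [AddCommGroup W] [Module K W]
    [FiniteDimensional K W] {p : ℕ} {φ : Fin p → W →ₗ[K] K}
    (hφ : LinearIndependent K φ) : Function.Surjective (LinearMap.pi φ) := by
  rw [← LinearMap.range_eq_top]
  by_contra h
  obtain ⟨f, f0, hf⟩ :=
    (LinearMap.range (LinearMap.pi φ)).exists_le_ker_of_lt_top (lt_top_iff_ne_top.mpr h)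
  set c : Fin p → K := fun i => f (Pi.single i 1) with hc
  have key : ∀ x : Fin p → K, f x = ∑ i, x i * c i := by
    intro x
    have hx : x = ∑ i, x i • (Pi.single i 1 : Fin p → K) := by
      ext j; simp [Pi.single_apply]
    conv_lhs => rw [hx, map_sum]
    simp [smul_eq_mul, hc]
  have hsum : ∑ i, c i • φ i = 0 := by
    ext w
    have : LinearMap.pi φ w ∈ LinearMap.ker f := hf (LinearMap.mem_range_self _ w)
    rw [LinearMap.mem_ker, key] at this
    simpa [LinearMap.pi_apply, mul_comm] using this
  have hc0 : ∀ i, c i = 0 := by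
    have := Fintype.linearIndependent_iff.mp hφ c hsum
    exact this
  exact f0 (LinearMap.ext fun x => by rw [key]; simp [hc0])

/-- For a symmetric bilinear form `B` on a finite-dimensional complex vector space,
a subspace `W` and `p ≤ dim W`, the restriction of `B` to `W` has rank at least `p`
if and only if there are families `v w : Fin p → W` with nonzero Gram determinant
`det (B (v i) (w j))_{i,j}`. -/
theorem rank_restrict_ge_iff_exists_gram_det_ne_zero {V : Type*} [AddCommGroup V]
    [Module ℂ V] [FiniteDimensional ℂ V]
    (B : V →ₗ[ℂ] V →ₗ[ℂ] ℂ) (hsymm : ∀ v w, B v w = B w v)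
    (W : Submodule ℂ V) (p : ℕ) (hp : p ≤ Module.finrank ℂ W) :
    p ≤ bilinRestrictRank B W ↔
      ∃ v w : Fin p → W,
        (Matrix.of fun i j => B (v i : V) (w j : V)).det ≠ 0 := by
  set B' := B.compl₁₂ W.subtype W.subtype with hB'
  have hB'app : ∀ (x y : W), B' x y = B (x : V) (y : V) := fun x y => rfl
  constructor
  · intro hrank
    -- pick p independent elements of the range
    obtain ⟨φ', hφ'⟩ := exists_linearIndependent_of_le_finrank (R := ℂ)
      (M := LinearMap.range B') hrank
    have hφ : LinearIndependent ℂ (fun i => ((φ' i : W →ₗ[ℂ] ℂ))) :=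
      hφ'.map' (LinearMap.range B').subtype (Submodule.ker_subtype _)
    -- choose preimages
    choose v hv using fun i => (φ' i).2
    -- joint surjectivity gives a dual family
    have hsurj := pi_surjective_of_linearIndependent hφ
    choose w hw using fun j => hsurj (Pi.single j 1)
    refine ⟨v, w, ?_⟩
    have hM : (Matrix.of fun i j => B (v i : V) (w j : V)) = (1 : Matrix (Fin p) (Fin p) ℂ) := by
      ext i j
      have h1 : B (v i : V) (w j : V) = (φ' i : W →ₗ[ℂ] ℂ) (w j) := by
        rw [← hv i]; rfl
      have h2 : (φ' i : W →ₗ[ℂ] ℂ) (w j) = (Pi.single j 1 : Fin p → ℂ) i := by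
        rw [← hw j]; rfl
      simp [Matrix.of_apply, h1, h2, Matrix.one_apply, Pi.single_apply, eq_comm]
    rw [hM, Matrix.det_one]
    exact one_ne_zero
  · rintro ⟨v, w, hdet⟩
    set M : Matrix (Fin p) (Fin p) ℂ := Matrix.of fun i j => B (v i : V) (w j : V) with hMdef
    -- the functionals B'(v i) are linearly independent
    have hindep : LinearIndependent ℂ (fun i => B' (v i)) := by
      rw [Fintype.linearIndependent_iff]
      intro c hc
      have hvm : Matrix.vecMul c M = 0 := by
        ext j
        have := LinearMap.congr_fun hc (w j)
        simpa [Matrix.vecMul, dotProduct, hMdef, hB'app, M] using this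
      have : c = 0 := by
        have h1 : Matrix.vecMul c (M * M⁻¹) = 0 := by
          rw [← Matrix.vecMul_vecMul, hvm, Matrix.zero_vecMul]
        rwa [Matrix.mul_nonsing_inv M (isUnit_iff_ne_zero.mpr hdet), Matrix.vecMul_one] at h1
      exact fun i => congrFun this i
    have hindep' : LinearIndependent ℂ
        (fun i => (⟨B' (v i), LinearMap.mem_range_self _ _⟩ : LinearMap.range B')) := by
      apply LinearIndependent.of_comp (LinearMap.range B').subtype
      exact hindep
    simpa [bilinRestrictRank, hB'] using hindep'.fintype_card_le_finrank
end
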